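/- There is a unique ring endomorphism φ of R whose restriction to A applies the Witt-vector Frobenius of W(k) to coefficients and sends q to q^p (i.e. substitutes q−1 ↦ (1+(q−1))^p − 1), and which satisfies φ(ε) = q^{p−1}·[p]_{q^{p^α}}·ε. Moreover φ is a Frobenius lift: φ(x) − x^p ∈ p·R for every x ∈ R. -/

import Mathlib

open Finset

/-- The q-analogue `[n]_t = ∑_{i=0}^{n-1} t^i`. -/
def qan {A : Type*} [CommRing A] (t : A) (n : ℕ) : A := ∑ i ∈ Finset.range n, t ^ i

/-- `A := W(k)⟦q−1⟧`, the power series ring over the `p`-typical Witt vectors of `k`;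
`q` denotes `1` plus the power series variable. -/
noncomputable def qq (p : ℕ) [Fact p.Prime] (k : Type*) [CommRing k] :
    PowerSeries (WittVector p k) :=
  1 + PowerSeries.X

/-- The distinguished element `d := [p]_{q^{p^α}}` of `A`. -/
noncomputable def dd (p α : ℕ) [Fact p.Prime] (k : Type*) [CommRing k] :
    PowerSeries (WittVector p k) :=
  qan ((qq p k) ^ p ^ α) p

/-- The polynomial `ε² − q·(q^{p^α}−1)·ε` over `A`, whose adjunction defines `R`. -/
noncomputable def relPoly (p α : ℕ) [Fact p.Prime] (k : Type*) [CommRing k] :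
    Polynomial (PowerSeries (WittVector p k)) :=
  Polynomial.X ^ 2 - Polynomial.C (qq p k * ((qq p k) ^ p ^ α - 1)) * Polynomial.X

/-- `R := A[ε]/(ε² − q·(q^{p^α}−1)·ε)`, a free `A`-module with basis `1, ε`. -/
noncomputable abbrev Rring (p α : ℕ) [Fact p.Prime] (k : Type*) [CommRing k] :=
  AdjoinRoot (relPoly p α k)

/-- `ε ∈ R`. -/
noncomputable def eps (p α : ℕ) [Fact p.Prime] (k : Type*) [CommRing k] : Rring p α k :=
  AdjoinRoot.root (relPoly p α k)


/-- The Frobenius lift on `A = W(k)⟦q−1⟧`: it applies the Witt-vector Frobenius of `W(k)`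
to the coefficients and substitutes `q ↦ q^p` (i.e. `X ↦ (1+X)^p − 1` for the variable
`X = q − 1`).  The coefficient of `X^m` is given by the (finite) coefficientwise
substitution formula, valid since `(1+X)^p − 1` has zero constant term. -/
noncomputable def frobSubst (p : ℕ) [Fact p.Prime] (k : Type*) [CommRing k]
    (f : PowerSeries (WittVector p k)) : PowerSeries (WittVector p k) :=
  PowerSeries.mk fun m =>
    ∑ n ∈ Finset.range (m + 1),
      WittVector.frobenius (PowerSeries.coeff n f) *
        PowerSeries.coeff m ((qq p k ^ p - 1) ^ n)

set_option linter.unusedSectionVars false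
open PowerSeries


namespace Stmt3Aux
variable {B : Type*} [CommRing B]

/-- substitution of `g` (zero constant term) into `f`, coefficientwise. -/
noncomputable def substFun (g f : PowerSeries B) : PowerSeries B :=
  PowerSeries.mk fun m => ∑ n ∈ Finset.range (m + 1), coeff n f * coeff m (g ^ n)

theorem coeff_g_pow (g : PowerSeries B) (hg : constantCoeff g = 0) {m n : ℕ} (h : m < n) :
    coeff m (g ^ n) = 0 := by
  have h1 : (X : B⟦X⟧) ∣ g := X_dvd_iff.mpr hg
  have h2 : (X : B⟦X⟧) ^ n ∣ g ^ n := pow_dvd_pow_of_dvd h1 n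
  exact X_pow_dvd_iff.mp h2 m h

theorem coeff_ev_trunc (g f : PowerSeries B) (m N : ℕ) :
    coeff m (Polynomial.eval₂ (C (R := B)) g (trunc N f)) =
      ∑ n ∈ Finset.range N, coeff n f * coeff m (g ^ n) := by
  induction N with
  | zero => simp [trunc_zero']
  | succ N ih =>
      rw [trunc_succ, Polynomial.eval₂_add, map_add, ih, Polynomial.eval₂_monomial,
        Finset.sum_range_succ, coeff_C_mul]

theorem coeff_substFun (g : PowerSeries B) (hg : constantCoeff g = 0) (f : PowerSeries B)
    {m N : ℕ} (h : m < N) :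
    coeff m (substFun g f) = coeff m (Polynomial.eval₂ (C (R := B)) g (trunc N f)) := by
  rw [coeff_ev_trunc, substFun, coeff_mk]
  apply Finset.sum_subset
  · intro x hx; simp only [Finset.mem_range] at *; omega
  · intro n _ hn
    simp only [Finset.mem_range, not_lt] at hn
    rw [coeff_g_pow g hg (by omega), mul_zero]

end Stmt3Aux
namespace Stmt3Aux
variable {B : Type*} [CommRing B]

noncomputable def substHom (g : PowerSeries B) (hg : constantCoeff g = 0) :
    PowerSeries B →+* PowerSeries B where
  toFun := substFun g
  map_one' := by
    ext m
    rw [coeff_substFun g hg 1 (Nat.lt_succ_self m), trunc_one, Polynomial.eval₂_one]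
  map_mul' := by
    intro f₁ f₂
    ext m
    set N := m + 1 with hN
    set P := trunc N f₁ with hP
    set Q := trunc N f₂ with hQ
    have hD : (Polynomial.X : Polynomial B) ^ N ∣ P * Q - trunc N (f₁ * f₂) := by
      rw [Polynomial.X_pow_dvd_iff]
      intro d hd
      rw [Polynomial.coeff_sub, Polynomial.coeff_mul, coeff_trunc, if_pos hd,
        PowerSeries.coeff_mul]
      rw [sub_eq_zero]
      apply Finset.sum_congr rfl
      intro ij hij
      have h1 : ij.1 ≤ d := Finset.HasAntidiagonal.antidiagonal.fst_le hij
      have h2 : ij.2 ≤ d := Finset.HasAntidiagonal.antidiagonal.snd_le hij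
      rw [hP, hQ, coeff_trunc, coeff_trunc, if_pos (by omega), if_pos (by omega)]
    obtain ⟨E, hE⟩ := hD
    have key : coeff m (Polynomial.eval₂ (C (R := B)) g (trunc N (f₁ * f₂))) =
        coeff m (Polynomial.eval₂ (C (R := B)) g (P * Q)) := by
      have : Polynomial.eval₂ (C (R := B)) g (P * Q) -
          Polynomial.eval₂ (C (R := B)) g (trunc N (f₁ * f₂)) =
          Polynomial.eval₂ (C (R := B)) g (Polynomial.X ^ N * E) := by
        rw [← Polynomial.eval₂_sub, ← hE]
      have hz : coeff m (Polynomial.eval₂ (C (R := B)) g (Polynomial.X ^ N * E)) = 0 := by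
        rw [Polynomial.eval₂_mul, Polynomial.eval₂_X_pow]
        have : (X : B⟦X⟧) ^ N ∣ g ^ N * Polynomial.eval₂ (C (R := B)) g E :=
          dvd_mul_of_dvd_left (pow_dvd_pow_of_dvd (X_dvd_iff.mpr hg) N) _
        exact X_pow_dvd_iff.mp this m (Nat.lt_succ_self m)
      have h2 := congrArg (coeff m) this
      rw [map_sub, hz, sub_eq_zero] at h2
      exact h2.symm
    rw [coeff_substFun g hg _ (Nat.lt_succ_self m), key, Polynomial.eval₂_mul,
      PowerSeries.coeff_mul, PowerSeries.coeff_mul]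
    apply Finset.sum_congr rfl
    intro ij hij
    have h1 : ij.1 ≤ m := Finset.HasAntidiagonal.antidiagonal.fst_le hij
    have h2 : ij.2 ≤ m := Finset.HasAntidiagonal.antidiagonal.snd_le hij
    rw [coeff_substFun g hg f₁ (show ij.1 < N by omega),
      coeff_substFun g hg f₂ (show ij.2 < N by omega)]
  map_zero' := by
    ext m; simp [substFun]
  map_add' := by
    intro f₁ f₂
    ext m
    simp [substFun, map_add, add_mul, Finset.sum_add_distrib]

theorem substHom_C (g : PowerSeries B) (hg : constantCoeff g = 0) (a : B) :
    substHom g hg (C a) = C a := by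
  ext m
  show coeff m (substFun g (C a)) = _
  rw [coeff_substFun g hg _ (Nat.lt_succ_self m)]
  rw [coeff_ev_trunc]
  rw [Finset.sum_eq_single 0]
  · rw [pow_zero, PowerSeries.coeff_C, PowerSeries.coeff_one]
    by_cases hm : m = 0 <;> simp [hm, PowerSeries.coeff_C]
  · intro n _ hn
    rw [PowerSeries.coeff_C, if_neg hn, zero_mul]
  · intro h; simp at h

theorem substHom_X (g : PowerSeries B) (hg : constantCoeff g = 0) :
    substHom g hg X = g := by
  ext m
  show coeff m (substFun g X) = _
  rw [coeff_substFun g hg _ (show m < m + 2 by omega), coeff_ev_trunc]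
  rw [Finset.sum_eq_single 1]
  · rw [PowerSeries.coeff_X, if_pos rfl, one_mul, pow_one]
  · intro n _ hn
    rw [PowerSeries.coeff_X, if_neg hn, zero_mul]
  · intro h; simp at h

end Stmt3Aux
namespace Stmt3Aux

theorem zmod_geom (p : ℕ) [hp : Fact p.Prime] :
    (∑ i ∈ Finset.range p, Polynomial.X ^ i) =
      (Polynomial.X - 1 : Polynomial (ZMod p)) ^ (p - 1) := by
  have hne : (Polynomial.X - 1 : Polynomial (ZMod p)) ≠ 0 := by
    intro h
    have := congrArg (Polynomial.eval 0) h
    simp at this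
  apply mul_right_cancel₀ hne
  rw [geom_sum_mul, ← pow_succ, show p - 1 + 1 = p from Nat.succ_pred_eq_of_pos hp.out.pos,
    sub_pow_char, one_pow]

theorem int_geom_dvd (p : ℕ) [hp : Fact p.Prime] :
    (p : Polynomial ℤ) ∣ (∑ i ∈ Finset.range p, Polynomial.X ^ i) -
      (Polynomial.X - 1) ^ (p - 1) := by
  set D : Polynomial ℤ := (∑ i ∈ Finset.range p, Polynomial.X ^ i) -
      (Polynomial.X - 1) ^ (p - 1) with hD
  have hmap : Polynomial.map (Int.castRingHom (ZMod p)) D = 0 := by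
    rw [hD, Polynomial.map_sub, Polynomial.map_pow, Polynomial.map_sub, Polynomial.map_X,
      Polynomial.map_one, sub_eq_zero, Polynomial.map_sum]
    simp only [Polynomial.map_pow, Polynomial.map_X]
    exact zmod_geom p
  have : (p : Polynomial ℤ) = Polynomial.C (p : ℤ) := by simp
  rw [this, Polynomial.C_dvd_iff_dvd_coeff]
  intro n
  have := congrArg (fun q => Polynomial.coeff q n) hmap
  simp only [Polynomial.coeff_map, Polynomial.coeff_zero] at this
  exact_mod_cast (ZMod.intCast_zmod_eq_zero_iff_dvd _ p).mp this

theorem geom_dvd {B : Type*} [CommRing B] (p : ℕ) [hp : Fact p.Prime] (t : B) :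
    (p : B) ∣ (∑ i ∈ Finset.range p, t ^ i) - (t - 1) ^ (p - 1) := by
  have h := map_dvd (Polynomial.aeval t (R := ℤ)) (int_geom_dvd p)
  simpa using h

end Stmt3Aux
namespace Stmt3Aux

variable (p : ℕ) [hp : Fact p.Prime] (k : Type*) [Field k] [CharP k p] [PerfectRing k p]

theorem witt_frob_sub_pow_dvd (a : WittVector p k) :
    (p : WittVector p k) ∣ WittVector.frobenius a - a ^ p := by
  set x := WittVector.frobenius a - a ^ p with hx
  by_cases hx0 : x = 0
  · rw [hx0]; exact dvd_zero _
  obtain ⟨m, b, hb, hxe⟩ := WittVector.exists_eq_pow_p_mul x hx0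
  cases m with
  | zero =>
      exfalso
      have h0 : WittVector.constantCoeff x = 0 := by
        rw [hx, map_sub, map_pow]
        have h1 : (WittVector.frobenius a).coeff 0 = a.coeff 0 ^ p :=
          WittVector.coeff_frobenius_charP (p := p) a 0
        simp only [WittVector.constantCoeff_apply, h1]
        exact sub_self _
      rw [pow_zero, one_mul] at hxe
      rw [hxe] at h0
      exact hb h0
  | succ s =>
      rw [hxe]
      exact dvd_mul_of_dvd_left (dvd_pow_self (p : WittVector p k) (Nat.succ_ne_zero s)) b

theorem dvd_of_coeff_dvd (x : PowerSeries (WittVector p k))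
    (h : ∀ n, (p : WittVector p k) ∣ PowerSeries.coeff n x) :
    (p : PowerSeries (WittVector p k)) ∣ x := by
  refine ⟨PowerSeries.mk fun n => (h n).choose, PowerSeries.ext fun n => ?_⟩
  have hc := (h n).choose_spec
  have hpc : (p : PowerSeries (WittVector p k)) =
      PowerSeries.C (p : WittVector p k) := by simp
  rw [hpc, PowerSeries.coeff_C_mul, PowerSeries.coeff_mk]
  exact hc

theorem p_nonunit_A : (p : PowerSeries (WittVector p k)) ∈ nonunits (PowerSeries (WittVector p k)) := by
  intro h
  have h2 := h.map ((WittVector.constantCoeff).comp ((PowerSeries.constantCoeff (R := WittVector p k))))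
  rw [map_natCast] at h2
  rw [CharP.cast_eq_zero k p] at h2
  exact zero_ne_one (isUnit_zero_iff.mp h2)

end Stmt3Aux

namespace Stmt3Aux

variable (p : ℕ) [hp : Fact p.Prime] (k : Type*) [Field k] [CharP k p] [PerfectRing k p]

theorem hg0 : (PowerSeries.constantCoeff (R := WittVector p k)) ((qq p k) ^ p - 1) = 0 := by
  simp [qq]

/-- The Frobenius lift on `A`, as a ring hom. -/
noncomputable def Phi : PowerSeries (WittVector p k) →+* PowerSeries (WittVector p k) :=
  (substHom ((qq p k) ^ p - 1) (hg0 p k)).comp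
    (PowerSeries.map (WittVector.frobenius : WittVector p k →+* WittVector p k))

theorem frobSubst_eq (f : PowerSeries (WittVector p k)) : frobSubst p k f = Phi p k f := by
  refine PowerSeries.ext fun m => ?_
  rw [frobSubst, PowerSeries.coeff_mk, Phi, RingHom.comp_apply]
  show _ = PowerSeries.coeff m (substFun _ _)
  rw [substFun, PowerSeries.coeff_mk]
  exact Finset.sum_congr rfl fun n _ => by rw [PowerSeries.coeff_map]

theorem Phi_C (a : WittVector p k) :
    Phi p k (PowerSeries.C a) = PowerSeries.C (WittVector.frobenius a) := by
  rw [Phi, RingHom.comp_apply, PowerSeries.map_C]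
  exact substHom_C _ _ _

theorem Phi_X : Phi p k PowerSeries.X = (qq p k) ^ p - 1 := by
  rw [Phi, RingHom.comp_apply, PowerSeries.map_X]
  exact substHom_X _ _

theorem Phi_qq : Phi p k (qq p k) = (qq p k) ^ p := by
  rw [qq, map_add, map_one, Phi_X, qq]
  ring

local notation "A'" => PowerSeries (WittVector p k)

theorem keyA (f : PowerSeries (WittVector p k)) :
    (p : PowerSeries (WittVector p k)) ∣ Phi p k f - f ^ p := by
  classical
  set I : Ideal A' := Ideal.span {(p : A')} with hI
  haveI : CharP (A' ⧸ I) p := CharP.quotient _ p (p_nonunit_A p k)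
  set ρ : A' →+* A' ⧸ I := Ideal.Quotient.mk I with hρ
  set S : Subring A' := RingHom.eqLocus (ρ.comp (Phi p k)) ((frobenius (A' ⧸ I) p).comp ρ)
    with hS
  have hmem : ∀ x : A', x ∈ S ↔ (p : A') ∣ Phi p k x - x ^ p := by
    intro x
    have h1 : x ∈ S ↔ ρ (Phi p k x) = frobenius (A' ⧸ I) p (ρ x) := Iff.rfl
    rw [h1, frobenius_def, ← map_pow, Ideal.Quotient.mk_eq_mk_iff_sub_mem,
      Ideal.mem_span_singleton]
  -- C a is in S
  have hCmem : ∀ a : WittVector p k, (PowerSeries.C a : A') ∈ S := by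
    intro a
    rw [hmem]
    obtain ⟨w, hw⟩ := witt_frob_sub_pow_dvd p k a
    refine ⟨PowerSeries.C w, ?_⟩
    rw [Phi_C, ← map_pow, ← map_sub, hw, map_mul, map_natCast]
  -- X is in S
  have hXmem : (PowerSeries.X : A') ∈ S := by
    rw [hmem]
    rw [Phi_X, ← Ideal.mem_span_singleton, ← hI, ← Ideal.Quotient.eq_zero_iff_mem]
    rw [qq]
    simp only [map_sub, map_pow, map_add, map_one]
    rw [add_pow_char, one_pow]
    ring
  -- polynomials are in S
  have hPoly : ∀ t : Polynomial (WittVector p k),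
      (p : A') ∣ Phi p k (t : A') - (t : A') ^ p := by
    intro t
    rw [← hmem]
    induction t using Polynomial.induction_on with
    | C a => rw [Polynomial.coe_C]; exact hCmem a
    | add f g hf hg => rw [Polynomial.coe_add]; exact S.add_mem hf hg
    | monomial n a hn =>
        have : ((Polynomial.C a * Polynomial.X ^ (n + 1) : Polynomial (WittVector p k)) : A')
            = ((Polynomial.C a * Polynomial.X ^ n : Polynomial (WittVector p k)) : A')
              * PowerSeries.X := by
          push_cast [pow_succ]
          ring
        rw [this]
        exact S.mul_mem hn hXmem
  -- general case, coefficientwise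
  apply dvd_of_coeff_dvd
  intro m
  set N := m + 1 with hN
  set t : A' := ((PowerSeries.trunc N f : Polynomial (WittVector p k)) : A') with ht
  have hXd : (PowerSeries.X : A') ^ N ∣ f - t := by
    rw [PowerSeries.X_pow_dvd_iff]
    intro j hj
    rw [map_sub, ht, Polynomial.coeff_coe, PowerSeries.coeff_trunc, if_pos hj, sub_self]
  have hdvd1 : (PowerSeries.X : A') ^ N ∣ Phi p k (f - t) := by
    obtain ⟨h', hh'⟩ := hXd
    rw [hh', map_mul, map_pow, Phi_X]
    exact dvd_mul_of_dvd_left (pow_dvd_pow_of_dvd (PowerSeries.X_dvd_iff.mpr (hg0 p k)) N) _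
  have hdvd2 : (PowerSeries.X : A') ^ N ∣ f ^ p - t ^ p :=
    dvd_trans hXd (sub_dvd_pow_sub_pow f t p)
  have hcoeff1 : PowerSeries.coeff m (Phi p k (f - t)) = 0 :=
    PowerSeries.X_pow_dvd_iff.mp hdvd1 m (Nat.lt_succ_self m)
  have hcoeff2 : PowerSeries.coeff m (f ^ p - t ^ p) = 0 :=
    PowerSeries.X_pow_dvd_iff.mp hdvd2 m (Nat.lt_succ_self m)
  obtain ⟨u, hu⟩ := hPoly (PowerSeries.trunc N f)
  have hsplit : Phi p k f - f ^ p = (Phi p k t - t ^ p) + Phi p k (f - t) - (f ^ p - t ^ p) := by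
    rw [map_sub]
    ring
  rw [hsplit, map_sub, map_add, hcoeff1, hcoeff2, add_zero, sub_zero, ht, hu]
  have : (p : A') = PowerSeries.C (p : WittVector p k) := by simp
  rw [this, PowerSeries.coeff_C_mul]
  exact Dvd.intro _ rfl

end Stmt3Aux

namespace Stmt3Aux

variable (p : ℕ) [hp : Fact p.Prime] (k : Type*) [Field k] [CharP k p] [PerfectRing k p]

theorem eps_sq (α : ℕ) : eps p α k ^ 2
    = algebraMap _ _ (qq p k * ((qq p k) ^ p ^ α - 1)) * eps p α k := by
  have h : AdjoinRoot.mk (relPoly p α k) (Polynomial.X ^ 2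
      - Polynomial.C (qq p k * ((qq p k) ^ p ^ α - 1)) * Polynomial.X) = 0 :=
    AdjoinRoot.mk_self (f := relPoly p α k)
  simp only [map_sub, map_mul, map_pow, map_one, AdjoinRoot.mk_X, AdjoinRoot.mk_C] at h
  show AdjoinRoot.root (relPoly p α k) ^ 2
      = algebraMap _ _ (qq p k * ((qq p k) ^ p ^ α - 1)) * AdjoinRoot.root (relPoly p α k)
  rw [AdjoinRoot.algebraMap_eq, map_mul, map_sub, map_pow, map_one]
  linear_combination h

theorem eps_pow (α n : ℕ) : eps p α k ^ (n + 1)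
    = algebraMap _ _ (qq p k * ((qq p k) ^ p ^ α - 1)) ^ n * eps p α k := by
  induction n with
  | zero => simp
  | succ s ih =>
      rw [pow_succ, ih, mul_assoc, ← pow_two, eps_sq p k α, pow_succ]
      ring

theorem p_nonunit_R (α : ℕ) : (p : Rring p α k) ∈ nonunits (Rring p α k) := by
  intro h
  have h0 : (relPoly p α k).eval₂
      ((WittVector.constantCoeff).comp ((PowerSeries.constantCoeff (R := WittVector p k)))) 0 = 0 := by
    rw [show relPoly p α k = Polynomial.X ^ 2
        - Polynomial.C (qq p k * ((qq p k) ^ p ^ α - 1)) * Polynomial.X from rfl]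
    simp
  have h2 := h.map (AdjoinRoot.lift _ 0 h0)
  rw [map_natCast, CharP.cast_eq_zero k p] at h2
  exact zero_ne_one (isUnit_zero_iff.mp h2)

theorem dd_sub_dvd (α : ℕ) :
    (p : PowerSeries (WittVector p k)) ∣
      dd p α k - ((qq p k) ^ p ^ α - 1) ^ (p - 1) := by
  have h := geom_dvd p ((qq p k) ^ p ^ α)
  have hdd : dd p α k = ∑ i ∈ Finset.range p, ((qq p k) ^ p ^ α) ^ i := rfl
  rw [hdd]
  exact h

end Stmt3Aux

/-- There is a unique ring endomorphism `φ` of `R` whose restriction to `A`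
is the coefficientwise-Frobenius substitution `q ↦ q^p`, and which satisfies
`φ(ε) = q^{p−1}·[p]_{q^{p^α}}·ε`.  Moreover any such `φ` is a Frobenius lift:
`φ(x) − x^p ∈ p·R` for every `x ∈ R`. -/
theorem stmt3 (p : ℕ) [Fact p.Prime] (α : ℕ)
    (k : Type*) [Field k] [CharP k p] [PerfectRing k p] :
    (∃! φ : Rring p α k →+* Rring p α k,
      (∀ a : PowerSeries (WittVector p k),
        φ (algebraMap _ _ a) = algebraMap _ _ (frobSubst p k a)) ∧
      φ (eps p α k) = algebraMap _ _ ((qq p k) ^ (p - 1) * dd p α k) * eps p α k) ∧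
    (∀ φ : Rring p α k →+* Rring p α k,
      ((∀ a : PowerSeries (WittVector p k),
        φ (algebraMap _ _ a) = algebraMap _ _ (frobSubst p k a)) ∧
      φ (eps p α k) = algebraMap _ _ ((qq p k) ^ (p - 1) * dd p α k) * eps p α k) →
      ∀ x : Rring p α k, φ x - x ^ p ∈ Ideal.span {(p : Rring p α k)}) := by
  classical
  have hprime : p.Prime := Fact.out
  have hp1 : p - 1 + 1 = p := Nat.succ_pred_eq_of_pos hprime.pos
  have hqpow : qq p k ^ (p - 1) * qq p k = qq p k ^ p := by rw [← pow_succ, hp1]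
  have hdd : dd p α k = ∑ i ∈ Finset.range p, ((qq p k) ^ p ^ α) ^ i := rfl
  have hgeom : dd p α k * ((qq p k) ^ p ^ α - 1) = ((qq p k) ^ p ^ α) ^ p - 1 := by
    rw [hdd]; exact geom_sum_mul _ p
  set Φ := Stmt3Aux.Phi p k with hΦ
  set i : PowerSeries (WittVector p k) →+* Rring p α k :=
    (algebraMap (PowerSeries (WittVector p k)) (Rring p α k)).comp Φ with hi
  have hPhic : Φ (qq p k * ((qq p k) ^ p ^ α - 1))
      = qq p k ^ p * (((qq p k) ^ p ^ α) ^ p - 1) := by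
    rw [map_mul, map_sub, map_pow, map_one, hΦ, Stmt3Aux.Phi_qq, pow_right_comm]
  have hArel : (qq p k ^ (p - 1) * dd p α k) ^ 2 * (qq p k * ((qq p k) ^ p ^ α - 1))
      = Φ (qq p k * ((qq p k) ^ p ^ α - 1)) * (qq p k ^ (p - 1) * dd p α k) := by
    rw [hPhic]
    linear_combination (qq p k ^ (p - 1) * dd p α k * dd p α k * ((qq p k) ^ p ^ α - 1)) * hqpow
      + (qq p k ^ (p - 1) * dd p α k * qq p k ^ p) * hgeom
  have he2 := Stmt3Aux.eps_sq p k α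
  have hArel' : (algebraMap (PowerSeries (WittVector p k)) (Rring p α k))
        (qq p k ^ (p - 1) * dd p α k) ^ 2 *
        (algebraMap (PowerSeries (WittVector p k)) (Rring p α k))
          (qq p k * ((qq p k) ^ p ^ α - 1))
      = (algebraMap (PowerSeries (WittVector p k)) (Rring p α k))
          (Φ (qq p k * ((qq p k) ^ p ^ α - 1))) *
        (algebraMap (PowerSeries (WittVector p k)) (Rring p α k))
          (qq p k ^ (p - 1) * dd p α k) := by
    rw [← map_pow, ← map_mul, ← map_mul, hArel]
  have hroot : (relPoly p α k).eval₂ i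
      (algebraMap _ _ ((qq p k) ^ (p - 1) * dd p α k) * eps p α k) = 0 := by
    show Polynomial.eval₂ i
        (algebraMap _ _ ((qq p k) ^ (p - 1) * dd p α k) * eps p α k)
        (Polynomial.X ^ 2
          - Polynomial.C (qq p k * ((qq p k) ^ p ^ α - 1)) * Polynomial.X) = 0
    rw [Polynomial.eval₂_sub, Polynomial.eval₂_mul, Polynomial.eval₂_C,
      Polynomial.eval₂_X, Polynomial.eval₂_X_pow]
    have hic : i (qq p k * ((qq p k) ^ p ^ α - 1))
        = algebraMap _ _ (Φ (qq p k * ((qq p k) ^ p ^ α - 1))) := rfl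
    rw [hic]
    linear_combination ((algebraMap (PowerSeries (WittVector p k)) (Rring p α k))
        (qq p k ^ (p - 1) * dd p α k)) ^ 2 * he2 + eps p α k * hArel'
  set φ0 : Rring p α k →+* Rring p α k := AdjoinRoot.lift i
    (algebraMap _ _ ((qq p k) ^ (p - 1) * dd p α k) * eps p α k) hroot with hφ0
  have hprop1 : ∀ a : PowerSeries (WittVector p k),
      φ0 (algebraMap _ _ a) = algebraMap _ _ (frobSubst p k a) := by
    intro a
    rw [AdjoinRoot.algebraMap_eq]
    show AdjoinRoot.lift i _ hroot (AdjoinRoot.of _ a) = _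
    rw [AdjoinRoot.lift_of, Stmt3Aux.frobSubst_eq]
    rfl
  have hprop2 : φ0 (eps p α k)
      = algebraMap _ _ ((qq p k) ^ (p - 1) * dd p α k) * eps p α k := by
    exact AdjoinRoot.lift_root hroot
  have hmkC : ∀ a : PowerSeries (WittVector p k),
      AdjoinRoot.mk (relPoly p α k) (Polynomial.C a) = algebraMap _ _ a := by
    intro a
    rw [AdjoinRoot.mk_C, AdjoinRoot.algebraMap_eq]
  constructor
  · refine ⟨φ0, ⟨hprop1, hprop2⟩, ?_⟩
    rintro ψ ⟨hψ1, hψ2⟩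
    refine (RingHom.cancel_right (AdjoinRoot.mk_surjective)).mp ?_
    apply Polynomial.ringHom_ext
    · intro a
      simp only [RingHom.comp_apply]
      rw [hmkC a, hψ1 a, hprop1 a]
    · simp only [RingHom.comp_apply, AdjoinRoot.mk_X]
      show ψ (eps p α k) = φ0 (eps p α k)
      rw [hψ2, hprop2]
  · rintro ψ ⟨hψ1, hψ2⟩ x
    haveI : CharP (Rring p α k ⧸ Ideal.span {(p : Rring p α k)}) p :=
      CharP.quotient _ p (Stmt3Aux.p_nonunit_R p k α)
    set π := Ideal.Quotient.mk (Ideal.span {(p : Rring p α k)}) with hπ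
    suffices h : π.comp ψ = (frobenius _ p).comp π by
      have h2 := RingHom.congr_fun h x
      simp only [RingHom.comp_apply, frobenius_def] at h2
      rw [← map_pow] at h2
      exact (Ideal.Quotient.mk_eq_mk_iff_sub_mem _ _).mp h2
    refine (RingHom.cancel_right (AdjoinRoot.mk_surjective)).mp ?_
    apply Polynomial.ringHom_ext
    · intro a
      simp only [RingHom.comp_apply]
      rw [hmkC a, hψ1 a, Stmt3Aux.frobSubst_eq, frobenius_def, ← map_pow, ← map_pow]
      rw [Ideal.Quotient.mk_eq_mk_iff_sub_mem, ← map_sub]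
      obtain ⟨u, hu⟩ := Stmt3Aux.keyA p k a
      rw [← hΦ] at hu
      rw [hu, map_mul, map_natCast]
      exact Ideal.mem_span_singleton.mpr (Dvd.intro _ rfl)
    · simp only [RingHom.comp_apply, AdjoinRoot.mk_X]
      show π (ψ (eps p α k)) = frobenius _ p (π (eps p α k))
      rw [hψ2, frobenius_def, ← map_pow]
      have hep := Stmt3Aux.eps_pow p k α (p - 1)
      rw [hp1] at hep
      rw [hep]
      rw [Ideal.Quotient.mk_eq_mk_iff_sub_mem]
      obtain ⟨v, hv⟩ := Stmt3Aux.dd_sub_dvd p k α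
      have hdiff : (qq p k) ^ (p - 1) * dd p α k
          - (qq p k * ((qq p k) ^ p ^ α - 1)) ^ (p - 1)
          = (p : PowerSeries (WittVector p k)) * ((qq p k) ^ (p - 1) * v) := by
        rw [mul_pow]
        linear_combination (qq p k ^ (p - 1)) * hv
      have : algebraMap _ (Rring p α k) ((qq p k) ^ (p - 1) * dd p α k) * eps p α k
          - algebraMap _ _ (qq p k * ((qq p k) ^ p ^ α - 1)) ^ (p - 1) * eps p α k
          = (p : Rring p α k) *
            (algebraMap _ _ ((qq p k) ^ (p - 1) * v) * eps p α k) := by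
        rw [← map_pow, ← sub_mul, ← map_sub, hdiff, map_mul, map_natCast, mul_assoc]
      rw [this]
      exact Ideal.mem_span_singleton.mpr (Dvd.intro _ rfl)
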